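/- Let f : ℝⁿ → ℝ be C¹ with L-Lipschitz gradient in a neighborhood of a local minimum x̄ with value f* and solution set S. If the error bound μ·dist(x,S) ≤ ‖∇f(x)‖ holds near x̄, then the PL inequality f(x) - f* ≤ (L/(2μ²))‖∇f(x)‖² holds for all x sufficiently close to x̄. -/

import Mathlib

open Metric Filter Topology

lemma descent {n : ℕ} (f : EuclideanSpace ℝ (Fin n) → ℝ)
    (hf : ContDiff ℝ 1 f) (L : ℝ) (hL : 0 ≤ L)
    (U : Set (EuclideanSpace ℝ (Fin n)))
    (hLip : ∀ x ∈ U, ∀ y ∈ U, ‖gradient f x - gradient f y‖ ≤ L * ‖x - y‖)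
    (x y : EuclideanSpace ℝ (Fin n)) (hseg : segment ℝ y x ⊆ U)
    (hgy : gradient f y = 0) :
    f x - f y ≤ L / 2 * ‖x - y‖ ^ 2 := by
  have hdiff : Differentiable ℝ f := hf.differentiable one_ne_zero
  set c : ℝ → EuclideanSpace ℝ (Fin n) := fun t => y + t • (x - y) with hc
  have hcmem : ∀ t ∈ Set.Icc (0:ℝ) 1, c t ∈ U := by
    intro t ht
    exact hseg ⟨1 - t, t, by linarith [ht.2], ht.1, by ring, by
      simp [hc]; module⟩
  have hderiv : ∀ t : ℝ, HasDerivAt (fun t => f (c t))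
      (inner ℝ (gradient f (c t)) (x - y) : ℝ) t := by
    intro t
    have h1 : HasDerivAt c (x - y) t := by
      have : HasDerivAt (fun t : ℝ => t • (x - y)) (x - y) t := by
        simpa using (hasDerivAt_id t).smul_const (x - y)
      simpa [hc] using this.const_add y
    have h2 : HasFDerivAt f (fderiv ℝ f (c t)) (c t) := (hdiff (c t)).hasFDerivAt
    have := h2.comp_hasDerivAt t h1
    have hgrad : fderiv ℝ f (c t) (x - y) = (inner ℝ (gradient f (c t)) (x - y) : ℝ) := by
      have := (hdiff (c t)).hasGradientAt.hasFDerivAt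
      rw [this.fderiv]
      simp [InnerProductSpace.toDual_apply_apply]
    rwa [hgrad] at this
  have hy : y ∈ U := by simpa [hc] using hcmem 0 (by norm_num)
  have key : ∀ t ∈ Set.Icc (0:ℝ) 1, f (c t) ≤ f y + L / 2 * ‖x - y‖ ^ 2 * t ^ 2 := by
    refine image_le_of_deriv_right_le_deriv_boundary
      (f' := fun t => (inner ℝ (gradient f (c t)) (x - y) : ℝ))
      (B := fun t => f y + L / 2 * ‖x - y‖ ^ 2 * t ^ 2)
      (B' := fun t => L * ‖x - y‖ ^ 2 * t)
      (fun t _ => (hderiv t).continuousAt.continuousWithinAt)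
      (fun t _ => (hderiv t).hasDerivWithinAt)
      (by simp [hc]) (by fun_prop) ?_ ?_
    · intro t ht
      have h : HasDerivAt (fun t : ℝ => f y + L / 2 * ‖x - y‖ ^ 2 * t ^ 2)
          (L * ‖x - y‖ ^ 2 * t) t := by
        have := ((hasDerivAt_pow 2 t).const_mul (L / 2 * ‖x - y‖ ^ 2)).const_add (f y)
        exact this.congr_deriv (by ring)
      exact h.hasDerivWithinAt
    · intro t ht
      have ht0 : 0 ≤ t := ht.1
      calc (inner ℝ (gradient f (c t)) (x - y) : ℝ)
          ≤ ‖gradient f (c t)‖ * ‖x - y‖ := real_inner_le_norm _ _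
        _ ≤ (L * ‖c t - y‖) * ‖x - y‖ := by
            apply mul_le_mul_of_nonneg_right _ (norm_nonneg _)
            have := hLip (c t) (hcmem t ⟨ht0, ht.2.le⟩) y hy
            simpa [hgy, hc] using this
        _ = L * ‖x - y‖ ^ 2 * t := by
            have h : ‖c t - y‖ = t * ‖x - y‖ := by
              simp [hc, norm_smul, abs_of_nonneg ht0]
            rw [h]; ring
  have := key 1 (by norm_num)
  simp only [hc] at this
  simp at this
  linarith

/-- Error bound implies PL with constant `μ²/L` for C¹ functions with `L`-Lipschitz gradient. -/
theorem eb_implies_pl_c1 {n : ℕ}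
    (f : EuclideanSpace ℝ (Fin n) → ℝ) (xb : EuclideanSpace ℝ (Fin n))
    (hf : ContDiff ℝ 1 f) (hmin : IsLocalMin f xb)
    (μ L : ℝ) (hμ : 0 < μ) (hL : 0 ≤ L)
    (S : Set (EuclideanSpace ℝ (Fin n)))
    (hS : S = {y | IsLocalMin f y ∧ f y = f xb})
    (U : Set (EuclideanSpace ℝ (Fin n))) (hU : U ∈ 𝓝 xb)
    (hLip : ∀ x ∈ U, ∀ y ∈ U, ‖gradient f x - gradient f y‖ ≤ L * ‖x - y‖)
    (hEB : ∀ x ∈ U, μ * Metric.infDist x S ≤ ‖gradient f x‖) :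
    ∀ᶠ x in 𝓝 xb, f x - f xb ≤ (L / (2 * μ ^ 2)) * ‖gradient f x‖ ^ 2 := by
  obtain ⟨r, hr0, hrU⟩ := Metric.mem_nhds_iff.1 hU
  have hSne : S.Nonempty := ⟨xb, by rw [hS]; exact ⟨hmin, rfl⟩⟩
  have hgradS : ∀ y ∈ S, gradient f y = 0 := by
    intro y hy
    rw [hS] at hy
    rw [gradient, hy.1.fderiv_eq_zero, map_zero]
  filter_upwards [Metric.ball_mem_nhds xb (by linarith : (0:ℝ) < r/4)] with x hx
  have hxr : dist x xb < r/4 := mem_ball.1 hx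
  have hxU : x ∈ U := hrU (mem_ball.2 (by linarith))
  set d := Metric.infDist x S with hd
  have hd0 : 0 ≤ d := Metric.infDist_nonneg
  have hdlt : d < r/4 := lt_of_le_of_lt (Metric.infDist_le_dist_of_mem (by rw [hS]; exact ⟨hmin, rfl⟩)) hxr
  -- step 1 : f x - f xb ≤ L/2 * d^2
  have step1 : f x - f xb ≤ L/2 * d^2 := by
    have hev : ∀ ε ∈ Set.Ioo (0:ℝ) (r/4), f x - f xb ≤ L/2 * (d + ε)^2 := by
      intro ε hε
      obtain ⟨y, hyS, hyd⟩ := (Metric.infDist_lt_iff hSne).1 (by linarith [hε.1] : d < d + ε)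
      have hyxb : dist y xb < r := by
        have := dist_triangle y x xb
        rw [dist_comm y x] at this
        linarith [hε.2]
      have hseg : segment ℝ y x ⊆ U :=
        fun z hz => hrU ((convex_ball xb r).segment_subset (mem_ball.2 hyxb)
          (mem_ball.2 (by linarith)) hz)
      have hdesc := descent f hf L hL U hLip x y hseg (hgradS y hyS)
      have hfy : f y = f xb := by rw [hS] at hyS; exact hyS.2
      have hxy : ‖x - y‖ ≤ d + ε := by
        rw [← dist_eq_norm]; exact le_of_lt hyd
      have h2 : ‖x - y‖^2 ≤ (d + ε)^2 := by
        apply pow_le_pow_left₀ (norm_nonneg _) hxy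
      nlinarith
    have htend : Filter.Tendsto (fun ε : ℝ => L/2 * (d + ε)^2) (𝓝[>] 0) (𝓝 (L/2 * d^2)) := by
      have : Filter.Tendsto (fun ε : ℝ => L/2 * (d + ε)^2) (𝓝 0) (𝓝 (L/2 * (d+0)^2)) := by
        apply Filter.Tendsto.const_mul
        exact ((continuous_const.add continuous_id).pow 2).tendsto 0
      simpa using this.mono_left nhdsWithin_le_nhds
    refine ge_of_tendsto htend ?_
    filter_upwards [Ioo_mem_nhdsGT_of_mem (by constructor <;> linarith : (0:ℝ) ∈ Set.Ico 0 (r/4))] with ε hε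
    exact hev ε hε
  -- step 2 : combine with EB
  have heb := hEB x hxU
  have hdle : d ≤ ‖gradient f x‖ / μ := by
    rw [le_div_iff₀ hμ]; linarith [heb]
  have hdsq : d^2 ≤ (‖gradient f x‖ / μ)^2 := pow_le_pow_left₀ hd0 hdle 2
  calc f x - f xb ≤ L/2 * d^2 := step1
    _ ≤ L/2 * (‖gradient f x‖ / μ)^2 := by nlinarith
    _ = (L / (2 * μ ^ 2)) * ‖gradient f x‖ ^ 2 := by field_simp
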